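/- arXiv:2106.14751 — 4 statements merged into one kernel-verified Lean document; each statement's English description precedes it below -/
import Mathlib

section
/- For every integer n ≥ 1, the Bell number of the second kind bel_n satisfies (-1)^(n-1) · bel_n = Σ_{k=1}^{n} (k-1)! · |s(n,k)|, where |s(n,k)| denotes the unsigned Stirling number of the first kind. -/
open PowerSeries Finset

noncomputable section

/-- Composition of formal power series (the standard composition when the inner
series `f` has zero constant term, since then `coeff n (f ^ k) = 0` for `k > n`). -/
def pcomp {R : Type*} [CommRing R] (g f : PowerSeries R) : PowerSeries R :=
  PowerSeries.mk fun n =>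
    ∑ k ∈ Finset.range (n + 1), PowerSeries.coeff k g * PowerSeries.coeff n (f ^ k)

/-- The formal power series `log(1+t)` over `ℚ`. -/
def Lq : PowerSeries ℚ := PowerSeries.mk fun n => if n = 0 then 0 else (-1) ^ (n + 1) / n

/-- The formal power series `-log(1-t)` over `ℚ`. -/
def Labs : PowerSeries ℚ := PowerSeries.mk fun n => if n = 0 then 0 else 1 / n

/-- Signed Stirling numbers of the first kind: `(log(1+t))^k / k! = Σ S₁(n,k) tⁿ/n!`. -/
def S1 (n k : ℕ) : ℚ := n.factorial / k.factorial * PowerSeries.coeff n (Lq ^ k)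

/-- Unsigned Stirling numbers of the first kind: `(-log(1-t))^k / k! = Σ |s(n,k)| tⁿ/n!`. -/
def uS1 (n k : ℕ) : ℚ := n.factorial / k.factorial * PowerSeries.coeff n (Labs ^ k)

/-- Stirling numbers of the second kind: `(eᵗ-1)^k / k! = Σ S₂(n,k) tⁿ/n!`. -/
def S2 (n k : ℕ) : ℚ :=
  n.factorial / k.factorial * PowerSeries.coeff n ((PowerSeries.exp ℚ - 1) ^ k)

/-- `λ^(n-1) * (1)_{n,1/λ} = ∏_{j=1}^{n-1} (λ - j)`. -/
def dc (l : ℚ) (n : ℕ) : ℚ := ∏ j ∈ Finset.Ico 1 n, (l - j)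

/-- Degenerate falling factorial `(1)_{n,λ} = ∏_{j=0}^{n-1} (1 - jλ)`. -/
def ffac (l : ℚ) (n : ℕ) : ℚ := ∏ j ∈ Finset.range n, (1 - j * l)

/-- Degenerate logarithm `log_λ(1+t) = Σ_{n≥1} λ^{n-1}(1)_{n,1/λ} tⁿ/n!`. -/
def Ld (l : ℚ) : PowerSeries ℚ :=
  PowerSeries.mk fun n => if n = 0 then 0 else dc l n / n.factorial

/-- Degenerate exponential `e_λ(t) = Σ_{n≥0} (1)_{n,λ} tⁿ/n!`. -/
def Ed (l : ℚ) : PowerSeries ℚ := PowerSeries.mk fun n => ffac l n / n.factorial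

/-- Degenerate Stirling numbers of the first kind. -/
def S1d (l : ℚ) (n k : ℕ) : ℚ :=
  n.factorial / k.factorial * PowerSeries.coeff n (Ld l ^ k)

/-- Degenerate Stirling numbers of the second kind. -/
def S2d (l : ℚ) (n k : ℕ) : ℚ :=
  n.factorial / k.factorial * PowerSeries.coeff n ((Ed l - 1) ^ k)

/-- Bell numbers of the second kind: `log(1 + log(1+t)) = Σ_{n≥1} bel_n tⁿ/n!`. -/
def belNum (n : ℕ) : ℚ := n.factorial * PowerSeries.coeff n (pcomp Lq Lq)

/-- Bell numbers of the second kind via the explicit formula. -/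
def belN (m : ℕ) : ℚ :=
  ∑ k ∈ Finset.Icc 1 m, (-1) ^ (k - 1) * (k - 1).factorial * S1 m k

/-- Bell polynomials of the second kind. -/
def belPoly (n : ℕ) : Polynomial ℚ :=
  ∑ k ∈ Finset.Icc 1 n,
    Polynomial.C ((-1) ^ (k - 1) * (k - 1).factorial * S1 n k) * Polynomial.X ^ k

/-- Bell polynomials of the second kind evaluated at `x : ℚ`. -/
def belVal (x : ℚ) (m : ℕ) : ℚ :=
  ∑ k ∈ Finset.Icc 1 m, (-1) ^ (k - 1) * (k - 1).factorial * S1 m k * x ^ k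

/-- Degenerate Bell numbers of the second kind via generating function. -/
def belNumD (l : ℚ) (n : ℕ) : ℚ := n.factorial * PowerSeries.coeff n (pcomp (Ld l) (Ld l))

/-- Degenerate Bell numbers of the second kind via the explicit formula. -/
def belND (l : ℚ) (m : ℕ) : ℚ := ∑ j ∈ Finset.Icc 1 m, dc l j * S1d l m j

/-- Degenerate Bell polynomials of the second kind. -/
def belPolyD (l : ℚ) (n : ℕ) : Polynomial ℚ :=
  ∑ k ∈ Finset.Icc 1 n, Polynomial.C (dc l k * S1d l n k) * Polynomial.X ^ k

/-- `log(1+t)` as a power series over `ℚ[x]`. -/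
def LqP : PowerSeries (Polynomial ℚ) :=
  PowerSeries.mk fun n => if n = 0 then 0 else Polynomial.C ((-1) ^ (n + 1) / n : ℚ)

/-- `-log(1-t)` as a power series over `ℚ[x]`. -/
def LabsP : PowerSeries (Polynomial ℚ) :=
  PowerSeries.mk fun n => if n = 0 then 0 else Polynomial.C (1 / n : ℚ)

/-- `log(1-t)` as a power series over `ℚ[x]`. -/
def MP : PowerSeries (Polynomial ℚ) :=
  PowerSeries.mk fun n => if n = 0 then 0 else Polynomial.C (-(1 / n) : ℚ)

/-- `log_λ(1+t)` as a power series over `ℚ[x]`. -/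
def LdP (l : ℚ) : PowerSeries (Polynomial ℚ) :=
  PowerSeries.mk fun n => if n = 0 then 0 else Polynomial.C (dc l n / n.factorial)

/-- The polylogarithm `Li_k(y) = Σ_{m≥1} yᵐ/mᵏ` as a power series over `ℚ[x]`. -/
def LiP (k : ℤ) : PowerSeries (Polynomial ℚ) :=
  PowerSeries.mk fun m => if m = 0 then 0 else Polynomial.C (((m : ℚ) ^ k)⁻¹)

/-- The degenerate polylogarithm `Li_{k,λ}` as a power series over `ℚ[x]`. -/
def LidP (l : ℚ) (k : ℤ) : PowerSeries (Polynomial ℚ) :=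
  PowerSeries.mk fun m => if m = 0 then 0 else
    Polynomial.C ((-1) ^ (m - 1) * dc l m / ((m - 1).factorial * (m : ℚ) ^ k))

/-- `-x · log(1-t)` over `ℚ[x]`. -/
def innerP : PowerSeries (Polynomial ℚ) := PowerSeries.C Polynomial.X * LabsP

/-- `-x · log_λ(1-t)` over `ℚ[x]`. -/
def innerD (l : ℚ) : PowerSeries (Polynomial ℚ) :=
  PowerSeries.C Polynomial.X *
    PowerSeries.mk fun n => if n = 0 then 0 else
      Polynomial.C ((-1) ^ (n + 1) * dc l n / n.factorial)

/-- Poly-Bell polynomials of the second kind via generating function. -/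
def polyBellP (k : ℤ) (n : ℕ) : Polynomial ℚ :=
  (n.factorial : ℚ) • PowerSeries.coeff n (pcomp (LiP k) innerP)

/-- Poly-Bell polynomials of the second kind via the explicit formula. -/
def belPk (k : ℤ) (n : ℕ) : Polynomial ℚ :=
  ∑ l ∈ Finset.Icc 1 n,
    Polynomial.C ((((l : ℚ) ^ (k - 1))⁻¹) * (l - 1).factorial * uS1 n l) * Polynomial.X ^ l

/-- Degenerate poly-Bell polynomials of the second kind via generating function. -/
def belDPk (l : ℚ) (k : ℤ) (n : ℕ) : Polynomial ℚ :=
  (n.factorial : ℚ) • PowerSeries.coeff n (pcomp (LidP l k) (innerD l))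

/-- Degenerate poly-Bell polynomials of the second kind via the explicit formula. -/
def belE (l : ℚ) (k : ℤ) (m : ℕ) : Polynomial ℚ :=
  (-1 : Polynomial ℚ) ^ (m - 1) *
    ∑ j ∈ Finset.Icc 1 m,
      Polynomial.C ((((j : ℚ) ^ (k - 1))⁻¹) * dc l j * S1d l m j) * Polynomial.X ^ j

lemma Lq_eq : Lq = -(PowerSeries.rescale (-1) Labs) := by
  ext n
  simp only [Lq, Labs, PowerSeries.coeff_mk, PowerSeries.coeff_rescale, map_neg]
  split_ifs with h
  · simp
  · rw [pow_succ]; ring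

lemma coeff_Lq_pow (n k : ℕ) :
    PowerSeries.coeff n (Lq ^ k) = (-1)^(n+k) * PowerSeries.coeff n (Labs ^ k) := by
  rw [Lq_eq, neg_pow, ← map_pow]
  rw [show ((-1 : PowerSeries ℚ))^k = PowerSeries.C ((-1)^k) by simp]
  rw [PowerSeries.coeff_C_mul, PowerSeries.coeff_rescale]
  ring

theorem stmt0 (n : ℕ) (hn : 1 ≤ n) :
    (-1 : ℚ) ^ (n - 1) * belNum n =
      ∑ k ∈ Finset.Icc 1 n, ((k - 1).factorial : ℚ) * uS1 n k := by
  obtain ⟨m, rfl⟩ : ∃ m, n = m + 1 := ⟨n - 1, (Nat.sub_add_cancel hn).symm⟩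
  rw [belNum, pcomp, PowerSeries.coeff_mk, Finset.sum_range_succ']
  have h0 : PowerSeries.coeff 0 Lq = 0 := by simp [Lq]
  rw [h0, zero_mul, add_zero]
  have hIcc : Finset.Icc 1 (m + 1) = (Finset.range (m + 1)).map ⟨Nat.succ, Nat.succ_injective⟩ := by
    ext x
    simp only [Finset.mem_Icc, Finset.mem_map, Finset.mem_range, Function.Embedding.coeFn_mk,
      Nat.succ_eq_add_one]
    constructor
    · rintro ⟨h1, h2⟩; exact ⟨x - 1, by omega, by omega⟩
    · rintro ⟨a, ha, rfl⟩; omega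
  rw [hIcc, Finset.sum_map, Finset.mul_sum, Finset.mul_sum]
  refine Finset.sum_congr rfl fun i _ => ?_
  simp only [Function.Embedding.coeFn_mk, Nat.succ_eq_add_one, Nat.add_sub_cancel]
  rw [coeff_Lq_pow, uS1]
  have hc : PowerSeries.coeff (i + 1) Lq = (-1) ^ (i + 2) / (i + 1) := by
    simp [Lq]
  rw [hc]
  have hfac : ((i + 1).factorial : ℚ) = (i + 1) * i.factorial := by
    push_cast [Nat.factorial_succ]; ring
  have hne : ((i : ℚ) + 1) ≠ 0 := by positivity
  have hfne : ((i.factorial : ℚ)) ≠ 0 := by positivity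
  have hs : (-1 : ℚ) ^ m * ((-1) ^ (i + 2) * (-1) ^ (m + 1 + (i + 1))) = 1 := by
    rw [← pow_add, ← pow_add]
    have h2 : m + (i + 2 + (m + 1 + (i + 1))) = 2 * (m + i + 2) := by ring
    rw [h2, pow_mul]; norm_num
  set c := PowerSeries.coeff (m + 1) (Labs ^ (i + 1)) with hcdef
  set F := ((m + 1).factorial : ℚ) with hFdef
  calc (-1:ℚ)^m * (F * ((-1) ^ (i + 2) / (↑i + 1) * ((-1) ^ (m + 1 + (i + 1)) * c)))
      = ((-1:ℚ)^m * ((-1) ^ (i + 2) * (-1) ^ (m + 1 + (i + 1)))) * (F * c / (↑i + 1)) := by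
        ring
    _ = F * c / (↑i + 1) := by rw [hs, one_mul]
    _ = ↑i.factorial * (F / ↑(i + 1).factorial * c) := by
        rw [hfac]; field_simp


end
end

section
/- For every integer n ≥ 0, Σ_{k=0}^{n} bel_{k+1}(-1) · S₂(n,k) = -d_n, where d_n is the number of derangements of n elements. -/
open PowerSeries Finset

noncomputable section

lemma coeff_pow_zero' {f : PowerSeries ℚ} (hf : constantCoeff f = 0) {k n : ℕ}
    (h : n < k) : coeff n (f ^ k) = 0 := by
  have hd : (X : PowerSeries ℚ) ^ k ∣ f ^ k :=
    pow_dvd_pow_of_dvd (PowerSeries.X_dvd_iff.mpr hf) k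
  exact PowerSeries.X_pow_dvd_iff.mp hd n h

lemma coeff_pcomp (g f : PowerSeries ℚ) (n : ℕ) :
    coeff n (pcomp g f) = ∑ k ∈ range (n + 1), coeff k g * coeff n (f ^ k) := by
  simp [pcomp]

lemma coeff_pcomp_stab (g f : PowerSeries ℚ) (hf : constantCoeff f = 0) {n N : ℕ}
    (hN : n < N) :
    coeff n (pcomp g f) = ∑ k ∈ range N, coeff k g * coeff n (f ^ k) := by
  rw [coeff_pcomp]
  refine Finset.sum_subset (fun k hk => ?_) (fun k hk hk' => ?_)
  · simp only [mem_range] at *; omega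
  · have : n < k := by simp only [mem_range] at *; omega
    rw [coeff_pow_zero' hf this, mul_zero]

lemma coeff_pcomp_eq (g f : PowerSeries ℚ) (hf : constantCoeff f = 0) {n N : ℕ}
    (hN : n < N) :
    coeff n (pcomp g f)
      = coeff n (∑ k ∈ range N, C (coeff k g) * f ^ k) := by
  rw [coeff_pcomp_stab g f hf hN, map_sum]
  exact Finset.sum_congr rfl fun k _ => by rw [coeff_C_mul]

lemma sum_range_antidiag (N n : ℕ) (hn : n < N) (g : ℕ → ℕ → ℚ)
    (hg : ∀ k l, n < k + l → g k l = 0) :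
    ∑ m ∈ range (2 * N), ∑ p ∈ antidiagonal m, g p.1 p.2
      = ∑ k ∈ range N, ∑ l ∈ range N, g k l := by
  rw [Finset.sum_sigma']
  rw [← Finset.sum_product']
  have h1 : ∑ x ∈ (range (2*N)).sigma (fun m => antidiagonal m), g x.2.1 x.2.2
      = ∑ p ∈ (range (2*N) ×ˢ range (2*N)).filter (fun p => p.1 + p.2 < 2*N), g p.1 p.2 := by
    refine Finset.sum_nbij' (fun x => x.2) (fun p => ⟨p.1 + p.2, p⟩) ?_ ?_ ?_ ?_ ?_
    · rintro ⟨m, p⟩ h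
      simp only [Finset.mem_sigma, mem_range, Finset.HasAntidiagonal.mem_antidiagonal] at h
      simp only [Finset.mem_filter, Finset.mem_product, mem_range]
      omega
    · rintro p hp
      simp only [Finset.mem_filter, Finset.mem_product, mem_range] at hp
      refine Finset.mem_sigma.mpr ⟨?_, ?_⟩
      · simp only [mem_range]; omega
      · simp [Finset.HasAntidiagonal.mem_antidiagonal]
    · rintro ⟨m, p⟩ h
      simp only [Finset.mem_sigma, mem_range, Finset.HasAntidiagonal.mem_antidiagonal] at h
      simp [h.2]
    · intro p hp; rfl
    · intro x hx; rfl
  rw [h1]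
  rw [Finset.sum_filter]
  have h2 : ∀ p ∈ (range (2*N) ×ˢ range (2*N)),
      (if p.1 + p.2 < 2*N then g p.1 p.2 else 0) = g p.1 p.2 := by
    rintro ⟨k, l⟩ hp
    split_ifs with h
    · rfl
    · exact (hg k l (by omega)).symm
  rw [Finset.sum_congr rfl h2]
  symm
  refine Finset.sum_subset (Finset.product_subset_product ?_ ?_) (fun p hp hp' => ?_) <;>
    try exact Finset.range_subset_range.mpr (by omega)
  rcases p with ⟨k, l⟩
  simp only [Finset.mem_product, mem_range] at hp hp'
  exact hg k l (by omega)

lemma pcomp_one (f : PowerSeries ℚ) : pcomp 1 f = 1 := by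
  ext n
  rw [coeff_pcomp, Finset.sum_eq_single 0]
  · simp
  · intro k hk hk0
    simp [PowerSeries.coeff_one, hk0]
  · simp

lemma pcomp_add (a b f : PowerSeries ℚ) : pcomp (a + b) f = pcomp a f + pcomp b f := by
  ext n
  simp [coeff_pcomp, add_mul, Finset.sum_add_distrib]

lemma pcomp_neg (a f : PowerSeries ℚ) : pcomp (-a) f = -pcomp a f := by
  ext n
  simp [coeff_pcomp, Finset.sum_neg_distrib]

lemma pcomp_X (f : PowerSeries ℚ) (hf : constantCoeff f = 0) : pcomp X f = f := by
  ext n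
  rw [coeff_pcomp, Finset.sum_eq_single 1]
  · simp
  · intro k hk hk1
    rw [PowerSeries.coeff_X, if_neg hk1, zero_mul]
  · intro h
    simp only [mem_range] at h
    have hn : n = 0 := by omega
    subst hn
    simp [PowerSeries.coeff_X, ← coeff_zero_eq_constantCoeff_apply, hf]

lemma pcomp_mul (a b f : PowerSeries ℚ) (hf : constantCoeff f = 0) :
    pcomp (a * b) f = pcomp a f * pcomp b f := by
  ext n
  set N := n + 1 with hNdef
  have hrhs : coeff n (pcomp a f * pcomp b f)
      = coeff n ((∑ k ∈ range N, C (coeff k a) * f ^ k) *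
          (∑ k ∈ range N, C (coeff k b) * f ^ k)) := by
    rw [PowerSeries.coeff_mul, PowerSeries.coeff_mul]
    refine Finset.sum_congr rfl fun p hp => ?_
    rw [Finset.HasAntidiagonal.mem_antidiagonal] at hp
    rw [coeff_pcomp_eq a f hf (show p.1 < N by omega),
      coeff_pcomp_eq b f hf (show p.2 < N by omega)]
  have hAB : (∑ k ∈ range N, C (coeff k a) * f ^ k) *
        (∑ k ∈ range N, C (coeff k b) * f ^ k)
      = ∑ k ∈ range N, ∑ l ∈ range N,
          C (coeff k a * coeff l b) * f ^ (k + l) := by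
    rw [Finset.sum_mul_sum]
    refine Finset.sum_congr rfl fun k _ => Finset.sum_congr rfl fun l _ => ?_
    rw [map_mul, pow_add]; ring
  have hlhs : coeff n (pcomp (a * b) f)
      = ∑ m ∈ range (2 * N), ∑ p ∈ antidiagonal m,
          coeff p.1 a * coeff p.2 b * coeff n (f ^ (p.1 + p.2)) := by
    rw [coeff_pcomp_stab (a * b) f hf (show n < 2 * N by omega)]
    refine Finset.sum_congr rfl fun m _ => ?_
    rw [PowerSeries.coeff_mul, Finset.sum_mul]
    refine Finset.sum_congr rfl fun p hp => ?_
    rw [Finset.HasAntidiagonal.mem_antidiagonal] at hp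
    rw [hp]
  rw [hlhs, hrhs, hAB, map_sum]
  rw [sum_range_antidiag N n (by omega)
    (fun k l => coeff k a * coeff l b * coeff n (f ^ (k + l)))
    (fun k l h => by
      show coeff k a * coeff l b * coeff n (f ^ (k + l)) = 0
      rw [coeff_pow_zero' hf h, mul_zero])]
  refine Finset.sum_congr rfl fun k _ => ?_
  rw [map_sum]
  refine Finset.sum_congr rfl fun l _ => ?_
  rw [coeff_C_mul]

lemma pcomp_sub (a b f : PowerSeries ℚ) : pcomp (a - b) f = pcomp a f - pcomp b f := by
  rw [sub_eq_add_neg, pcomp_add, pcomp_neg, sub_eq_add_neg]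

lemma pcomp_derivative (g f : PowerSeries ℚ) (hf : constantCoeff f = 0) :
    d⁄dX ℚ (pcomp g f) = pcomp (d⁄dX ℚ g) f * d⁄dX ℚ f := by
  ext n
  set A : PowerSeries ℚ := ∑ k ∈ range (n + 2), C (coeff k g) * f ^ k with hA
  have h1 : coeff n (d⁄dX ℚ (pcomp g f)) = coeff n (d⁄dX ℚ A) := by
    rw [PowerSeries.coeff_derivative, PowerSeries.coeff_derivative,
      coeff_pcomp_eq g f hf (show n + 1 < n + 2 by omega)]
  have hdA : d⁄dX ℚ A =
      (∑ j ∈ range (n + 1), C (coeff j (d⁄dX ℚ g)) * f ^ j) * d⁄dX ℚ f := by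
    rw [hA, map_sum, Finset.sum_range_succ']
    have hz : C ((coeff 0) g) * f ^ 0 = C (coeff 0 g) * 1 := by rw [pow_zero]
    rw [Finset.sum_mul]
    have hterm : ∀ j, d⁄dX ℚ (C (coeff (j + 1) g) * f ^ (j + 1))
        = C (coeff j (d⁄dX ℚ g)) * f ^ j * d⁄dX ℚ f := by
      intro j
      rw [Derivation.leibniz, Derivation.leibniz_pow, PowerSeries.derivative_C,
        PowerSeries.coeff_derivative]
      simp only [smul_zero, add_zero, Nat.add_sub_cancel]
      simp only [smul_eq_mul, nsmul_eq_mul]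
      push_cast
      rw [map_mul, show (C ((j : ℚ) + 1) : ℚ⟦X⟧) = (j : ℚ⟦X⟧) + 1 from by
        rw [map_add, map_natCast, map_one]]
      ring
    rw [Finset.sum_congr rfl fun j _ => hterm j]
    simp [PowerSeries.derivative_C]
  have h2 : coeff n (pcomp (d⁄dX ℚ g) f * d⁄dX ℚ f)
      = coeff n ((∑ j ∈ range (n + 1), C (coeff j (d⁄dX ℚ g)) * f ^ j) * d⁄dX ℚ f) := by
    rw [PowerSeries.coeff_mul, PowerSeries.coeff_mul]
    refine Finset.sum_congr rfl fun p hp => ?_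
    rw [Finset.HasAntidiagonal.mem_antidiagonal] at hp
    rw [coeff_pcomp_eq (d⁄dX ℚ g) f hf (show p.1 < n + 1 by omega)]
  rw [h1, hdA, h2]





lemma hLq0 : constantCoeff Lq = 0 := by
  rw [← coeff_zero_eq_constantCoeff_apply]
  simp [Lq]

lemma dLq : d⁄dX ℚ Lq = PowerSeries.mk fun n => (-1 : ℚ) ^ n := by
  ext n
  rw [PowerSeries.coeff_derivative]
  simp only [Lq, coeff_mk, Nat.succ_ne_zero, if_neg]
  have h : ((n : ℚ) + 1) ≠ 0 := by positivity
  push_cast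
  field_simp
  rw [pow_succ, pow_succ]
  ring

lemma geomLq : (1 + X) * d⁄dX ℚ Lq = 1 := by
  rw [dLq]
  ext n
  rw [add_mul, one_mul, map_add]
  cases n with
  | zero => simp
  | succ m =>
    rw [PowerSeries.coeff_succ_X_mul, coeff_mk, coeff_mk, PowerSeries.coeff_one]
    simp [pow_succ]

lemma hE0 : constantCoeff (PowerSeries.exp ℚ - 1) = 0 := by
  rw [map_sub, PowerSeries.constantCoeff_exp, map_one, sub_self]

def Nser : PowerSeries ℚ := PowerSeries.mk fun n => (-1) ^ n / n.factorial

lemma expN : PowerSeries.exp ℚ * Nser = 1 := by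
  have h := PowerSeries.exp_mul_exp_neg_eq_one (A := ℚ)
  have hN : PowerSeries.evalNegHom (PowerSeries.exp ℚ) = Nser := by
    ext n
    rw [PowerSeries.evalNegHom, PowerSeries.coeff_rescale, PowerSeries.coeff_exp, Nser, coeff_mk]
    simp [div_eq_mul_inv, mul_comm]
  rw [← hN]; exact h

lemma dexp : d⁄dX ℚ (PowerSeries.exp ℚ) = PowerSeries.exp ℚ := by
  ext n
  rw [PowerSeries.coeff_derivative, PowerSeries.coeff_exp, PowerSeries.coeff_exp]
  have h1 : ((n + 1).factorial : ℚ) = (n + 1) * n.factorial := by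
    rw [Nat.factorial_succ]; push_cast; ring
  have h2 : ((n + 1).factorial : ℚ) ≠ 0 := Nat.cast_ne_zero.mpr (Nat.factorial_ne_zero _)
  have h3 : (n.factorial : ℚ) ≠ 0 := Nat.cast_ne_zero.mpr (Nat.factorial_ne_zero _)
  simp only [Algebra.algebraMap_self, RingHom.id_apply]
  field_simp [h1]
  exact h1.symm

lemma step1 : pcomp (d⁄dX ℚ Lq) (PowerSeries.exp ℚ - 1) = Nser := by
  have h1 : pcomp ((1 + X) * d⁄dX ℚ Lq) (PowerSeries.exp ℚ - 1) = 1 := by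
    rw [geomLq, pcomp_one]
  rw [pcomp_mul _ _ _ hE0, pcomp_add, pcomp_one, pcomp_X _ hE0,
    show (1 + (PowerSeries.exp ℚ - 1)) = PowerSeries.exp ℚ from by ring] at h1
  calc pcomp (d⁄dX ℚ Lq) (PowerSeries.exp ℚ - 1)
      = (Nser * PowerSeries.exp ℚ) * pcomp (d⁄dX ℚ Lq) (PowerSeries.exp ℚ - 1) := by
        rw [mul_comm Nser, expN, one_mul]
    _ = Nser * (PowerSeries.exp ℚ * pcomp (d⁄dX ℚ Lq) (PowerSeries.exp ℚ - 1)) := by ring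
    _ = Nser := by rw [h1, mul_one]

lemma step2 : pcomp Lq (PowerSeries.exp ℚ - 1) = X := by
  apply PowerSeries.derivative.ext
  · rw [pcomp_derivative _ _ hE0, step1, PowerSeries.derivative_X]
    have hd : d⁄dX ℚ (PowerSeries.exp ℚ - 1) = PowerSeries.exp ℚ := by
      rw [map_sub, dexp, Derivation.map_one_eq_zero, sub_zero]
    rw [hd, mul_comm, expN]
  · rw [← coeff_zero_eq_constantCoeff_apply, ← coeff_zero_eq_constantCoeff_apply,
      coeff_pcomp, Finset.sum_range_one]
    simp [Lq, PowerSeries.coeff_X]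

def Gs : PowerSeries ℚ :=
  PowerSeries.mk fun m => if m = 0 then 0 else -∑ j ∈ Finset.Icc 1 m, coeff m (Lq ^ j) / j

def Bs : PowerSeries ℚ := d⁄dX ℚ Gs

lemma coeffB (k : ℕ) : coeff k Bs = belVal (-1) (k + 1) / (k.factorial : ℚ) := by
  have hkf : ((k.factorial : ℚ)) ≠ 0 := Nat.cast_ne_zero.mpr (Nat.factorial_ne_zero _)
  rw [show Bs = d⁄dX ℚ Gs from rfl, PowerSeries.coeff_derivative, Gs, coeff_mk,
    if_neg (Nat.succ_ne_zero k), belVal, Finset.sum_div, neg_mul, Finset.sum_mul,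
    ← Finset.sum_neg_distrib]
  refine Finset.sum_congr rfl fun j hj => ?_
  rw [Finset.mem_Icc] at hj
  obtain ⟨i, rfl⟩ : ∃ i, j = i + 1 := ⟨j - 1, by omega⟩
  rw [S1]
  simp only [Nat.add_sub_cancel]
  have h1 : ((i.factorial : ℚ)) ≠ 0 := Nat.cast_ne_zero.mpr (Nat.factorial_ne_zero _)
  have h2 : ((i : ℚ) + 1) ≠ 0 := by positivity
  have h4 : ((-1 : ℚ)) ^ i * (-1) ^ i = 1 := by
    rw [← pow_add, ← two_mul, pow_mul, neg_one_sq, one_pow]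
  have hfact1 : (((i + 1).factorial : ℚ)) = ((i : ℚ) + 1) * i.factorial := by
    rw [Nat.factorial_succ]; push_cast; ring
  have hfact2 : (((k + 1).factorial : ℚ)) = ((k : ℚ) + 1) * k.factorial := by
    rw [Nat.factorial_succ]; push_cast; ring
  rw [pow_succ, hfact1, hfact2]
  push_cast
  field_simp
  ring_nf
  rw [mul_comm i 2, pow_mul, neg_one_sq, one_pow]
  ring

lemma coeff_pow_mul_dLq (p i : ℕ) :
    coeff p (Lq ^ i * d⁄dX ℚ Lq) * ((i : ℚ) + 1) = coeff (p + 1) (Lq ^ (i + 1)) * (p + 1) := by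
  have hd : d⁄dX ℚ (Lq ^ (i + 1)) = (i + 1) • (Lq ^ i * d⁄dX ℚ Lq) := by
    rw [Derivation.leibniz_pow]
    simp only [Nat.add_sub_cancel, smul_eq_mul, mul_assoc, smul_mul_assoc]
  have h0 := PowerSeries.coeff_derivative (Lq ^ (i + 1)) p
  rw [hd, map_nsmul, nsmul_eq_mul] at h0
  push_cast at h0
  rw [← h0]; ring

lemma Bmul : Bs * (1 - Lq) = -(d⁄dX ℚ Lq) := by
  ext n
  set S : PowerSeries ℚ := (∑ j ∈ Finset.Icc 1 (n + 1), Lq ^ (j - 1)) * d⁄dX ℚ Lq with hS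
  have stepA : ∀ p, p ≤ n → coeff p Bs = -coeff p S := by
    intro p hp
    have hSc : coeff p S = ∑ j ∈ Finset.Icc 1 (n + 1), coeff p (Lq ^ (j - 1) * d⁄dX ℚ Lq) := by
      rw [hS, Finset.sum_mul, map_sum]
    have htr : ∑ j ∈ Finset.Icc 1 (n + 1), coeff p (Lq ^ (j - 1) * d⁄dX ℚ Lq)
        = ∑ j ∈ Finset.Icc 1 (p + 1), coeff p (Lq ^ (j - 1) * d⁄dX ℚ Lq) := by
      symm
      apply Finset.sum_subset (Finset.Icc_subset_Icc_right (by omega))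
      intro j hj hj'
      have h1 : p < j - 1 := by
        simp only [Finset.mem_Icc] at hj hj'; omega
      rw [PowerSeries.coeff_mul]
      apply Finset.sum_eq_zero
      intro q hq
      rw [Finset.HasAntidiagonal.mem_antidiagonal] at hq
      rw [coeff_pow_zero' hLq0 (show q.1 < j - 1 by omega), zero_mul]
    rw [hSc, htr, show Bs = d⁄dX ℚ Gs from rfl, PowerSeries.coeff_derivative, Gs, coeff_mk,
      if_neg (Nat.succ_ne_zero p), neg_mul, ← Finset.sum_neg_distrib, Finset.sum_mul,
      ← Finset.sum_neg_distrib]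
    refine Finset.sum_congr rfl fun j hj => ?_
    rw [Finset.mem_Icc] at hj
    obtain ⟨i, rfl⟩ : ∃ i, j = i + 1 := ⟨j - 1, by omega⟩
    simp only [Nat.add_sub_cancel, neg_inj]
    have h := coeff_pow_mul_dLq p i
    have h2 : ((i : ℚ) + 1) ≠ 0 := by positivity
    field_simp
    rw [← h]
    push_cast; ring
  -- main assembly
  have hmain : coeff n (Bs * (1 - Lq)) = -coeff n (S * (1 - Lq)) := by
    rw [PowerSeries.coeff_mul, PowerSeries.coeff_mul, ← Finset.sum_neg_distrib]
    refine Finset.sum_congr rfl fun q hq => ?_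
    rw [Finset.HasAntidiagonal.mem_antidiagonal] at hq
    rw [stepA q.1 (by omega)]; ring
  have htel : S * (1 - Lq) = (1 - Lq ^ (n + 1)) * d⁄dX ℚ Lq := by
    rw [hS]
    have hg : (∑ j ∈ Finset.Icc 1 (n + 1), Lq ^ (j - 1)) * (1 - Lq) = 1 - Lq ^ (n + 1) := by
      have hre : ∑ j ∈ Finset.Icc 1 (n + 1), Lq ^ (j - 1)
          = ∑ i ∈ Finset.range (n + 1), Lq ^ i := by
        rw [← Finset.Ico_add_one_right_eq_Icc, Finset.sum_Ico_eq_sum_range]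
        simp
      rw [hre]
      have := geom_sum_mul Lq (n + 1)
      linear_combination -this
    calc (∑ j ∈ Finset.Icc 1 (n + 1), Lq ^ (j - 1)) * d⁄dX ℚ Lq * (1 - Lq)
        = ((∑ j ∈ Finset.Icc 1 (n + 1), Lq ^ (j - 1)) * (1 - Lq)) * d⁄dX ℚ Lq := by ring
      _ = (1 - Lq ^ (n + 1)) * d⁄dX ℚ Lq := by rw [hg]
  have hzero : coeff n (Lq ^ (n + 1) * d⁄dX ℚ Lq) = 0 := by
    rw [PowerSeries.coeff_mul]
    apply Finset.sum_eq_zero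
    intro q hq
    rw [Finset.HasAntidiagonal.mem_antidiagonal] at hq
    rw [coeff_pow_zero' hLq0 (show q.1 < n + 1 by omega), zero_mul]
  rw [hmain, htel, map_neg, sub_mul, one_mul, map_sub, hzero, sub_zero]

lemma hcomp : pcomp Bs (PowerSeries.exp ℚ - 1) * (1 - X) = -Nser := by
  have h := congrArg (fun z => pcomp z (PowerSeries.exp ℚ - 1)) Bmul
  rw [pcomp_mul _ _ _ hE0, pcomp_sub, pcomp_one, step2, pcomp_neg, step1] at h
  exact h

def Ds : PowerSeries ℚ := PowerSeries.mk fun m => (numDerangements m : ℚ) / m.factorial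

lemma hD : Ds * (1 - X) = Nser := by
  ext m
  rw [mul_sub, mul_one, map_sub]
  cases m with
  | zero =>
    rw [PowerSeries.coeff_zero_mul_X, sub_zero]
    simp [Ds, Nser, numDerangements_zero]
  | succ m =>
    rw [PowerSeries.coeff_succ_mul_X]
    simp only [Ds, Nser, coeff_mk]
    have key := numDerangements_succ m
    have keyQ : ((numDerangements (m + 1) : ℚ))
        = ((m : ℚ) + 1) * (numDerangements m : ℚ) - (-1) ^ m := by
      exact_mod_cast key
    have h1 : ((m.factorial : ℚ)) ≠ 0 := Nat.cast_ne_zero.mpr (Nat.factorial_ne_zero _)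
    have h2 : (((m + 1).factorial : ℚ)) = ((m : ℚ) + 1) * m.factorial := by
      rw [Nat.factorial_succ]; push_cast; ring
    have h3 : ((m : ℚ) + 1) ≠ 0 := by positivity
    rw [keyQ, h2]
    field_simp
    ring

lemma hBD : pcomp Bs (PowerSeries.exp ℚ - 1) = -Ds := by
  have h : (pcomp Bs (PowerSeries.exp ℚ - 1) + Ds) * (1 - X) = 0 := by
    rw [add_mul, hcomp, hD]; ring
  have h1 : (1 - X : PowerSeries ℚ) ≠ 0 := by
    intro hc
    have := congrArg (constantCoeff) hc
    simp [PowerSeries.constantCoeff_X] at this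
  rcases mul_eq_zero.mp h with h2 | h2
  · exact eq_neg_of_add_eq_zero_left h2
  · exact absurd h2 h1

theorem stmt2 (n : ℕ) :
    ∑ k ∈ Finset.range (n + 1), belVal (-1) (k + 1) * S2 n k = -(numDerangements n : ℚ) := by
  have hfac : ∀ k : ℕ, ((k.factorial : ℚ)) ≠ 0 :=
    fun k => Nat.cast_ne_zero.mpr (Nat.factorial_ne_zero _)
  have hterm : ∀ k, belVal (-1) (k + 1) * S2 n k
      = (n.factorial : ℚ) * (coeff k Bs * coeff n ((PowerSeries.exp ℚ - 1) ^ k)) := by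
    intro k
    have hb : belVal (-1) (k + 1) = coeff k Bs * k.factorial := by
      rw [coeffB k]; field_simp
    rw [hb, S2]
    field_simp
  rw [Finset.sum_congr rfl fun k _ => hterm k, ← Finset.mul_sum, ← coeff_pcomp, hBD, map_neg,
    show Ds = PowerSeries.mk fun m => (numDerangements m : ℚ) / m.factorial from rfl, coeff_mk]
  field_simp


end
end

section
/- For every integer n ≥ 1, λ^(n-1) (1)_{n,1/λ} x^n = Σ_{k=1}^{n} bel_{k,λ}(x) S_{2,λ}(n,k), as an identity of polynomials in x. -/
open PowerSeries Finset

noncomputable section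

private def acf (l : ℚ) (k j : ℕ) : ℚ := PowerSeries.coeff k (Ld l ^ j)
private def gcf (l : ℚ) (n k : ℕ) : ℚ := PowerSeries.coeff n ((Ed l - 1) ^ k)
private def uuf (l : ℚ) (n j : ℕ) : ℚ := ∑ k ∈ Finset.range (n+1), acf l k j * gcf l n k

private lemma xdmul (f : PowerSeries ℚ) (n : ℕ) :
    PowerSeries.coeff n (X * d⁄dX ℚ f) = n * PowerSeries.coeff n f := by
  cases n with
  | zero => simp
  | succ m => rw [coeff_succ_X_mul, coeff_derivative]; push_cast; ring

private lemma coeff_pow_lt {f : PowerSeries ℚ} (h : constantCoeff f = 0) {n k : ℕ}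
    (hnk : n < k) : PowerSeries.coeff n (f^k) = 0 := by
  have hx : (X : PowerSeries ℚ) ∣ f := X_dvd_iff.mpr h
  have hd : (X : PowerSeries ℚ)^k ∣ f^k := pow_dvd_pow_of_dvd hx k
  rw [X_pow_dvd_iff] at hd
  exact hd n hnk

private lemma cc_Ld (l : ℚ) : constantCoeff (Ld l) = 0 := by
  rw [← coeff_zero_eq_constantCoeff_apply]; simp [Ld]

private lemma cc_G (l : ℚ) : constantCoeff (Ed l - 1) = 0 := by
  rw [← coeff_zero_eq_constantCoeff_apply]; simp [Ed, ffac]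

private lemma ffac_succ (l : ℚ) (n : ℕ) : ffac l (n+1) = ffac l n * (1 - n * l) := by
  rw [ffac, Finset.prod_range_succ]; rfl

private lemma dc_succ (l : ℚ) (n : ℕ) (hn : 1 ≤ n) : dc l (n+1) = dc l n * (l - n) := by
  rw [dc, Finset.prod_Ico_succ_top hn]; rfl

private lemma edode (l : ℚ) : (1 + PowerSeries.C l * X) * d⁄dX ℚ (Ed l) = Ed l := by
  ext n
  rw [add_mul, one_mul, map_add, mul_assoc, coeff_C_mul]
  cases n with
  | zero =>
    simp [coeff_derivative, Ed, ffac]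
  | succ m =>
    rw [coeff_succ_X_mul, coeff_derivative, coeff_derivative]
    simp only [Ed, coeff_mk, ffac_succ]
    rw [Nat.factorial_succ, Nat.factorial_succ]
    have h1 : ((m+1).factorial : ℚ) ≠ 0 := Nat.cast_ne_zero.mpr (Nat.factorial_ne_zero _)
    have h2 : ((m).factorial : ℚ) ≠ 0 := Nat.cast_ne_zero.mpr (Nat.factorial_ne_zero _)
    field_simp
    push_cast
    ring

private lemma ldode (l : ℚ) : (1 + X) * d⁄dX ℚ (Ld l) = 1 + PowerSeries.C l * Ld l := by
  ext n
  rw [add_mul, one_mul, map_add, map_add, coeff_C_mul]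
  cases n with
  | zero =>
    simp [coeff_derivative, Ld, dc]
  | succ m =>
    rw [coeff_succ_X_mul, coeff_derivative, coeff_derivative]
    simp only [Ld, coeff_mk, Nat.succ_ne_zero, if_false, Nat.add_eq_zero, and_false,
      coeff_one]
    rw [dc_succ l (m+1) (by omega)]
    rw [Nat.factorial_succ (m+1), Nat.factorial_succ m]
    have h1 : ((m+1).factorial : ℚ) ≠ 0 := Nat.cast_ne_zero.mpr (Nat.factorial_ne_zero _)
    have h2 : ((m).factorial : ℚ) ≠ 0 := Nat.cast_ne_zero.mpr (Nat.factorial_ne_zero _)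
    field_simp
    push_cast
    ring

private lemma powOdeG (l : ℚ) (k : ℕ) :
    (1 + PowerSeries.C l * X) * d⁄dX ℚ ((Ed l - 1) ^ (k+1)) =
      PowerSeries.C ((k:ℚ)+1) * ((Ed l - 1) ^ (k+1) + (Ed l - 1) ^ k) := by
  have h : (1 + PowerSeries.C l * X) * d⁄dX ℚ (Ed l - 1) = Ed l := by
    rw [map_sub, Derivation.map_one_eq_zero, sub_zero, edode]
  rw [Derivation.leibniz_pow]
  simp only [Nat.add_sub_cancel, nsmul_eq_mul, smul_eq_mul]
  have hc : ((k+1 : ℕ) : PowerSeries ℚ) = PowerSeries.C ((k:ℚ)+1) := by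
    rw [← map_natCast (PowerSeries.C (R := ℚ)) (k+1)]; push_cast; ring_nf
  rw [hc]
  linear_combination (PowerSeries.C ((k:ℚ)+1) * (Ed l - 1)^k) * h

private lemma powOdeL (l : ℚ) (j : ℕ) :
    (1 + X) * d⁄dX ℚ (Ld l ^ (j+1)) =
      PowerSeries.C ((j:ℚ)+1) * (Ld l ^ j + PowerSeries.C l * Ld l ^ (j+1)) := by
  rw [Derivation.leibniz_pow]
  simp only [Nat.add_sub_cancel, nsmul_eq_mul, smul_eq_mul]
  have hc : ((j+1 : ℕ) : PowerSeries ℚ) = PowerSeries.C ((j:ℚ)+1) := by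
    rw [← map_natCast (PowerSeries.C (R := ℚ)) (j+1)]; push_cast; ring_nf
  rw [hc]
  linear_combination (PowerSeries.C ((j:ℚ)+1) * Ld l ^ j) * ldode l

private lemma gc_rec (l : ℚ) (n k : ℕ) :
    ((n:ℚ)+1) * gcf l (n+1) (k+1) =
      ((k:ℚ)+1) * gcf l n (k+1) + ((k:ℚ)+1) * gcf l n k - l * n * gcf l n (k+1) := by
  have h := congrArg (PowerSeries.coeff n) (powOdeG l k)
  rw [add_mul, one_mul, mul_assoc, map_add, coeff_C_mul, coeff_C_mul, map_add,
    xdmul, coeff_derivative] at h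
  simp only [gcf]

  linarith [h]

private lemma ac_rec (l : ℚ) (k j : ℕ) :
    ((k:ℚ)+1) * acf l (k+1) (j+1) =
      ((j:ℚ)+1) * acf l k j + ((j:ℚ)+1) * l * acf l k (j+1) - (k:ℚ) * acf l k (j+1) := by
  have h := congrArg (PowerSeries.coeff k) (powOdeL l j)
  rw [add_mul, one_mul, map_add, coeff_C_mul, map_add, coeff_C_mul,
    xdmul, coeff_derivative] at h
  simp only [acf]

  linarith [h]

private lemma ac0 (l : ℚ) (j : ℕ) : acf l 0 j = if j = 0 then 1 else 0 := by
  rw [acf, coeff_zero_eq_constantCoeff_apply, map_pow, cc_Ld]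
  cases j with
  | zero => simp
  | succ m => simp

private lemma gc00 (l : ℚ) (n : ℕ) : gcf l n 0 = if n = 0 then 1 else 0 := by
  rw [gcf, pow_zero, coeff_one]

private lemma ack0 (l : ℚ) (k : ℕ) : acf l k 0 = if k = 0 then 1 else 0 := by
  rw [acf, pow_zero, coeff_one]

private lemma ac_z (l : ℚ) {k j : ℕ} (h : k < j) : acf l k j = 0 :=
  coeff_pow_lt (cc_Ld l) h

private lemma gc_z (l : ℚ) {n k : ℕ} (h : n < k) : gcf l n k = 0 :=
  coeff_pow_lt (cc_G l) h

private lemma uu_rec (l : ℚ) (n j : ℕ) :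
    ((n:ℚ)+1) * uuf l (n+1) (j+1) =
      ((j:ℚ)+1) * uuf l n j + l * (((j:ℚ)+1) - (n:ℚ)) * uuf l n (j+1) := by
  have key : ∀ k, acf l (k+1) (j+1) * (((n:ℚ)+1) * gcf l (n+1) (k+1)) =
      (((k:ℚ)+1) - l*n) * (acf l (k+1) (j+1) * gcf l n (k+1))
      + (((j:ℚ)+1) * (acf l k j * gcf l n k)
          + ((((j:ℚ)+1)*l - (k:ℚ)) * (acf l k (j+1) * gcf l n k))) := by
    intro k
    have h1 := gc_rec l n k
    have h2 := ac_rec l k j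
    linear_combination acf l (k+1) (j+1) * h1 + gcf l n k * h2
  have hshift : ∑ k ∈ Finset.range (n+1),
      (((k:ℚ)+1) - l*n) * (acf l (k+1) (j+1) * gcf l n (k+1))
      = ∑ k ∈ Finset.range (n+1), ((k:ℚ) - l*n) * (acf l k (j+1) * gcf l n k) := by
    set F : ℕ → ℚ := fun m => ((m:ℚ) - l*n) * (acf l m (j+1) * gcf l n m) with hF
    have e1 : ∑ k ∈ Finset.range (n+2), F k
        = (∑ k ∈ Finset.range (n+1), F (k+1)) + F 0 := Finset.sum_range_succ' F (n+1)
    have e2 : ∑ k ∈ Finset.range (n+2), F k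
        = (∑ k ∈ Finset.range (n+1), F k) + F (n+1) := Finset.sum_range_succ F (n+1)
    have hF0 : F 0 = 0 := by simp [hF, ac_z l (Nat.succ_pos j)]
    have hFn : F (n+1) = 0 := by simp [hF, gc_z l (Nat.lt_succ_self n)]
    have hLF : (∑ k ∈ Finset.range (n+1),
        (((k:ℚ)+1) - l*n) * (acf l (k+1) (j+1) * gcf l n (k+1)))
        = ∑ k ∈ Finset.range (n+1), F (k+1) := by
      refine Finset.sum_congr rfl fun k _ => ?_
      simp only [hF]; push_cast; ring
    rw [hLF]
    linarith [e1, e2, hF0, hFn]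
  calc ((n:ℚ)+1) * uuf l (n+1) (j+1)
      = ∑ k ∈ Finset.range (n+2), acf l k (j+1) * (((n:ℚ)+1) * gcf l (n+1) k) := by
        rw [uuf, Finset.mul_sum]; exact Finset.sum_congr rfl fun k _ => by ring
    _ = (∑ k ∈ Finset.range (n+1), acf l (k+1) (j+1) * (((n:ℚ)+1) * gcf l (n+1) (k+1)))
        + acf l 0 (j+1) * (((n:ℚ)+1) * gcf l (n+1) 0) :=
        Finset.sum_range_succ' _ (n+1)
    _ = ∑ k ∈ Finset.range (n+1), acf l (k+1) (j+1) * (((n:ℚ)+1) * gcf l (n+1) (k+1)) := by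
        rw [ac_z l (Nat.succ_pos j)]; ring
    _ = (∑ k ∈ Finset.range (n+1), (((k:ℚ)+1) - l*n) * (acf l (k+1) (j+1) * gcf l n (k+1)))
        + ∑ k ∈ Finset.range (n+1), (((j:ℚ)+1) * (acf l k j * gcf l n k)
          + ((((j:ℚ)+1)*l - (k:ℚ)) * (acf l k (j+1) * gcf l n k))) := by
        rw [← Finset.sum_add_distrib]
        exact Finset.sum_congr rfl fun k _ => key k
    _ = (∑ k ∈ Finset.range (n+1), ((k:ℚ) - l*n) * (acf l k (j+1) * gcf l n k))
        + ∑ k ∈ Finset.range (n+1), (((j:ℚ)+1) * (acf l k j * gcf l n k)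
          + ((((j:ℚ)+1)*l - (k:ℚ)) * (acf l k (j+1) * gcf l n k))) := by rw [hshift]
    _ = ∑ k ∈ Finset.range (n+1), (((j:ℚ)+1) * (acf l k j * gcf l n k)
          + l * (((j:ℚ)+1) - (n:ℚ)) * (acf l k (j+1) * gcf l n k)) := by
        rw [← Finset.sum_add_distrib]
        exact Finset.sum_congr rfl fun k _ => by ring
    _ = ((j:ℚ)+1) * uuf l n j + l * (((j:ℚ)+1) - (n:ℚ)) * uuf l n (j+1) := by
        rw [uuf, uuf, Finset.mul_sum, Finset.mul_sum, ← Finset.sum_add_distrib]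

private lemma uu_eq (l : ℚ) : ∀ n j : ℕ, uuf l n j = if n = j then 1 else 0 := by
  intro n
  induction n with
  | zero =>
    intro j
    rw [uuf]
    rw [Finset.sum_range_one, ac0, gc00, if_pos rfl, mul_one]
    by_cases hj : j = 0
    · simp [hj]
    · rw [if_neg hj, if_neg (by omega)]
  | succ n ih =>
    intro j
    have hn1 : ((n:ℚ)+1) ≠ 0 := by positivity
    cases j with
    | zero =>
      rw [uuf]
      have hz : ∀ k ∈ Finset.range (n+2), acf l k 0 * gcf l (n+1) k = 0 := by
        intro k _
        by_cases hk : k = 0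
        · subst hk; rw [gc00, if_neg (by omega)]; ring
        · rw [ack0, if_neg hk]; ring
      rw [Finset.sum_eq_zero hz, if_neg (by omega)]
    | succ j =>
      have hrec := uu_rec l n j
      rw [ih j, ih (j+1)] at hrec
      by_cases h1 : n = j
      · subst h1
        rw [if_pos rfl, if_neg (by omega)] at hrec
        rw [if_pos rfl]
        have : ((n:ℚ)+1) * uuf l (n+1) (n+1) = ((n:ℚ)+1) * 1 := by
          rw [hrec]; ring
        exact mul_left_cancel₀ hn1 this
      · by_cases h2 : n = j + 1
        · subst h2
          rw [if_neg h1, if_pos rfl] at hrec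
          push_cast at hrec
          rw [if_neg (by omega)]
          have h3 : ((j:ℚ)+1+1) ≠ 0 := by positivity
          refine mul_left_cancel₀ h3 ?_
          rw [hrec]; ring
        · rw [if_neg h1, if_neg (by omega)] at hrec
          rw [if_neg (by omega)]
          have : ((n:ℚ)+1) * uuf l (n+1) (j+1) = ((n:ℚ)+1) * 0 := by
            rw [hrec]; ring
          exact mul_left_cancel₀ hn1 this

private lemma ortho (l : ℚ) (n j : ℕ) (hj : 1 ≤ j) :
    ∑ k ∈ Finset.Icc 1 n, S1d l k j * S2d l n k = if n = j then 1 else 0 := by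
  have hjf : ((j.factorial : ℚ)) ≠ 0 := Nat.cast_ne_zero.mpr (Nat.factorial_ne_zero _)
  have hterm : ∀ k, S1d l k j * S2d l n k
      = ((n.factorial : ℚ)/(j.factorial : ℚ)) * (acf l k j * gcf l n k) := by
    intro k
    have hk : ((k.factorial : ℚ)) ≠ 0 := Nat.cast_ne_zero.mpr (Nat.factorial_ne_zero _)
    rw [S1d, S2d, show PowerSeries.coeff k (Ld l ^ j) = acf l k j from rfl,
      show PowerSeries.coeff n ((Ed l - 1) ^ k) = gcf l n k from rfl]
    field_simp
  have hins : Finset.range (n+1) = insert 0 (Finset.Icc 1 n) := by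
    ext x; simp; omega
  have hsum : ∑ k ∈ Finset.Icc 1 n, acf l k j * gcf l n k = uuf l n j := by
    rw [uuf, hins, Finset.sum_insert (by simp), ac0, if_neg (by omega), zero_mul, zero_add]
  rw [Finset.sum_congr rfl (fun k _ => hterm k), ← Finset.mul_sum, hsum, uu_eq]
  by_cases h : n = j
  · subst h; rw [if_pos rfl, mul_one, div_self hjf]
  · rw [if_neg h, mul_zero]

theorem stmt10 (l : ℚ) (n : ℕ) (hn : 1 ≤ n) :
    Polynomial.C (dc l n) * (Polynomial.X : Polynomial ℚ) ^ n =
      ∑ k ∈ Finset.Icc 1 n, belPolyD l k * Polynomial.C (S2d l n k) := by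
  have hC : ∀ k ∈ Finset.Icc 1 n, belPolyD l k * Polynomial.C (S2d l n k)
      = ∑ j ∈ Finset.Icc 1 n,
          Polynomial.C (dc l j * S1d l k j * S2d l n k) * Polynomial.X ^ j := by
    intro k hk
    calc belPolyD l k * Polynomial.C (S2d l n k)
        = ∑ j ∈ Finset.Icc 1 k,
            Polynomial.C (dc l j * S1d l k j * S2d l n k) * Polynomial.X ^ j := by
          rw [belPolyD, Finset.sum_mul]
          refine Finset.sum_congr rfl fun j _ => ?_
          rw [mul_right_comm, ← Polynomial.C_mul]
      _ = ∑ j ∈ Finset.Icc 1 n,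
            Polynomial.C (dc l j * S1d l k j * S2d l n k) * Polynomial.X ^ j := by
          refine Finset.sum_subset
            (Finset.Icc_subset_Icc_right (Finset.mem_Icc.mp hk).2) ?_
          intro x hx hxk
          have hkx : k < x := by
            simp only [Finset.mem_Icc] at hx hxk; omega
          have hS : S1d l k x = 0 := by
            rw [S1d, show PowerSeries.coeff k (Ld l ^ x) = acf l k x from rfl,
              ac_z l hkx, mul_zero]
          rw [hS]
          simp
  rw [Finset.sum_congr rfl hC, Finset.sum_comm]
  have hcol : ∀ j ∈ Finset.Icc 1 n,
      (∑ k ∈ Finset.Icc 1 n,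
        Polynomial.C (dc l j * S1d l k j * S2d l n k) * Polynomial.X ^ j)
      = Polynomial.C (dc l j * (if n = j then 1 else 0)) * Polynomial.X ^ j := by
    intro j hj
    have hmul : ∑ k ∈ Finset.Icc 1 n, dc l j * S1d l k j * S2d l n k
        = dc l j * ∑ k ∈ Finset.Icc 1 n, S1d l k j * S2d l n k := by
      rw [Finset.mul_sum]
      exact Finset.sum_congr rfl fun k _ => by ring
    rw [← Finset.sum_mul, ← map_sum, hmul, ortho l n j (Finset.mem_Icc.mp hj).1]
  rw [Finset.sum_congr rfl hcol]
  rw [Finset.sum_eq_single_of_mem n (Finset.mem_Icc.mpr ⟨hn, le_refl n⟩)]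
  · rw [if_pos rfl, mul_one]
  · intro b hb hbn
    rw [if_neg (fun h => hbn h.symm), mul_zero, Polynomial.C_0, zero_mul]


end
end

section
/- For every integers n ≥ 1 and k, the poly-Bell polynomial of the second kind satisfies bel_n^{(k)}(x) = Σ_{l=1}^{n} (x^l / l^(k-1)) · (l-1)! · |s(n,l)|, where |s(n,l)| is the unsigned Stirling number of the first kind. -/
open PowerSeries Finset

noncomputable section

lemma LabsP_eq : LabsP = PowerSeries.map (Polynomial.C : ℚ →+* Polynomial ℚ) Labs := by
  ext n
  simp [LabsP, Labs, PowerSeries.coeff_map, apply_ite (Polynomial.C : ℚ →+* Polynomial ℚ)]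

theorem stmt12 (k : ℤ) (n : ℕ) (hn : 1 ≤ n) :
    polyBellP k n =
      ∑ l ∈ Finset.Icc 1 n,
        Polynomial.C ((((l : ℚ) ^ (k - 1))⁻¹) * (l - 1).factorial * uS1 n l) *
          Polynomial.X ^ l := by
  have hco : ∀ j : ℕ, (PowerSeries.coeff n) (innerP ^ j) =
      Polynomial.X ^ j * Polynomial.C ((PowerSeries.coeff n) (Labs ^ j)) := by
    intro j
    rw [innerP, mul_pow, ← map_pow, PowerSeries.coeff_C_mul, LabsP_eq, ← map_pow,
      PowerSeries.coeff_map]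
  unfold polyBellP pcomp
  rw [PowerSeries.coeff_mk, Finset.smul_sum]
  rw [← Finset.sum_subset (show Finset.Icc 1 n ⊆ Finset.range (n+1) by
      intro x hx; simp only [Finset.mem_Icc] at hx; simp only [Finset.mem_range]; omega)
    (by
      intro j _ hj
      have : j = 0 := by
        simp only [Finset.mem_Icc] at hj
        simp only [Finset.mem_range] at *
        omega
      subst this
      simp [LiP])]
  refine Finset.sum_congr rfl fun j hj => ?_
  simp only [Finset.mem_Icc] at hj
  have hj0 : (j : ℚ) ≠ 0 := by exact_mod_cast Nat.one_le_iff_ne_zero.mp hj.1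
  rw [hco, LiP, PowerSeries.coeff_mk, if_neg (by omega), uS1]
  rw [Polynomial.smul_eq_C_mul]
  have key : ((j:ℚ) ^ (k - 1))⁻¹ * ((j - 1).factorial : ℚ) *
      ((n.factorial : ℚ) / (j.factorial : ℚ) * (PowerSeries.coeff n) (Labs ^ j)) =
      (n.factorial : ℚ) * (((j:ℚ) ^ k)⁻¹ * (PowerSeries.coeff n) (Labs ^ j)) := by
    have hfac : (j.factorial : ℚ) = (j - 1).factorial * j := by
      rcases Nat.exists_eq_add_of_le hj.1 with ⟨m, rfl⟩
      simp [Nat.factorial, Nat.add_comm 1 m]; push_cast; ring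
    have hzp : ((j : ℚ) ^ k)⁻¹ = ((j : ℚ) ^ (k - 1))⁻¹ * (j : ℚ)⁻¹ := by
      rw [← mul_inv, ← zpow_add_one₀ hj0, sub_add_cancel]
    have hfne : (j.factorial : ℚ) ≠ 0 := by exact_mod_cast j.factorial_ne_zero
    rw [hzp, hfac]
    field_simp
  rw [key, map_mul, map_mul]
  ring
end
end
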